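/- Let X be a generalized quadratic set of type (SC) of Q⁺(5,q), q even, satisfying properties (1) and (2), with A₁ and A₂ as defined. Then (X \ A₁) ∪ A₂ is a hyperoval of Q⁺(5,q): it is nonempty and every plane of Q⁺(5,q) meets it in either 0 or a hyperoval (q+2 points, no three collinear) of that plane; in particular every line of Q⁺(5,q) meets it in 0 or 2 points. -/

import Mathlib

/-- An abstract model of the point-line-plane geometry of the Klein quadric
`Q⁺(5,q)`: points, lines and planes (all lines and planes being fully
contained in the quadric), where every plane with its lines is a projective
plane of order `q`, every line lies in a plane, there are `2(q+1)(q²+1)`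
planes and every point lies on exactly `2(q+1)` planes. -/
structure KleinGeom (q : ℕ) where
  P : Type
  fin : Fintype P
  lines : Set (Set P)
  planes : Set (Set P)
  line_card : ∀ L ∈ lines, L.ncard = q + 1
  line_in_plane : ∀ L ∈ lines, ∃ π ∈ planes, L ⊆ π
  plane_card : ∀ π ∈ planes, π.ncard = q ^ 2 + q + 1
  plane_two_points : ∀ π ∈ planes, ∀ x ∈ π, ∀ y ∈ π, x ≠ y →
    ∃! L, L ∈ lines ∧ L ⊆ π ∧ x ∈ L ∧ y ∈ L
  plane_point_lines : ∀ π ∈ planes, ∀ x ∈ π,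
    {L | L ∈ lines ∧ L ⊆ π ∧ x ∈ L}.ncard = q + 1
  planes_card : planes.ncard = 2 * (q + 1) * (q ^ 2 + 1)
  point_planes : ∀ x : P, {π | π ∈ planes ∧ x ∈ π}.ncard = 2 * (q + 1)

variable {q : ℕ}

/-- An oval of the plane `π`: `q+1` points of `π`, no three collinear. -/
def KleinGeom.IsOval (G : KleinGeom q) (π O : Set G.P) : Prop :=
  O ⊆ π ∧ O.ncard = q + 1 ∧
    ∀ L ∈ G.lines, L ⊆ π → (L ∩ O).ncard ≤ 2

/-- `k` is the kernel (nucleus) of the oval `O` of the plane `π`: every line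
of `π` through `k` meets `O` in exactly one point. -/
def KleinGeom.IsKernel (G : KleinGeom q) (π O : Set G.P) (k : G.P) : Prop :=
  k ∈ π ∧ k ∉ O ∧ ∀ L ∈ G.lines, L ⊆ π → k ∈ L → (L ∩ O).ncard = 1

/-- A generalized quadratic set of type (SC): a point set meeting each plane
in a single point (type (S)) or an oval (type (C)), both types occurring. -/
def KleinGeom.IsGQS (G : KleinGeom q) (X : Set G.P) : Prop :=
  (∀ π ∈ G.planes, (X ∩ π).ncard = 1 ∨ G.IsOval π (X ∩ π)) ∧
    (∃ π ∈ G.planes, (X ∩ π).ncard = 1) ∧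
    (∃ π ∈ G.planes, G.IsOval π (X ∩ π))

/-- `A₁`: the points of `X` lying in some plane of type (S). -/
def KleinGeom.A1 (G : KleinGeom q) (X : Set G.P) : Set G.P :=
  {x | x ∈ X ∧ ∃ π ∈ G.planes, x ∈ π ∧ (X ∩ π).ncard = 1}

/-- `A₂`: the kernels of the oval sections `π ∩ X` over type-(C) planes. -/
def KleinGeom.A2 (G : KleinGeom q) (X : Set G.P) : Set G.P :=
  {k | ∃ π ∈ G.planes, G.IsOval π (X ∩ π) ∧ G.IsKernel π (X ∩ π) k}

/-- Property (1): every plane through a point of `A₁` has type (S). -/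
def KleinGeom.Prop1 (G : KleinGeom q) (X : Set G.P) : Prop :=
  ∀ π ∈ G.planes, ∀ x ∈ G.A1 X, x ∈ π → (X ∩ π).ncard = 1

/-- Property (2): every plane through a point `x ∈ A₂` has type (C) and `x`
is the kernel of its oval section. -/
def KleinGeom.Prop2 (G : KleinGeom q) (X : Set G.P) : Prop :=
  ∀ π ∈ G.planes, ∀ x ∈ G.A2 X, x ∈ π →
    G.IsOval π (X ∩ π) ∧ G.IsKernel π (X ∩ π) x


section helpers
variable {α : Type*} {s : Finset α} {f : α → ℕ}

lemma sum_all_one_of_le (h1 : ∀ a ∈ s, f a ≤ 1) (h : s.card ≤ ∑ a ∈ s, f a) :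
    ∀ a ∈ s, f a = 1 := by
  classical
  by_contra hc
  push_neg at hc
  obtain ⟨a, ha, hfa⟩ := hc
  have hfa0 : f a = 0 := by have := h1 a ha; omega
  have h2 : ∑ x ∈ s.erase a, f x = ∑ x ∈ s, f x := Finset.sum_erase _ hfa0
  have h3 : ∑ x ∈ s.erase a, f x ≤ (s.erase a).card • 1 :=
    Finset.sum_le_card_nsmul _ _ _ (fun x hx => h1 x (Finset.mem_of_mem_erase hx))
  have h4 : (s.erase a).card = s.card - 1 := Finset.card_erase_of_mem ha
  have h5 : 1 ≤ s.card := Finset.card_pos.mpr ⟨a, ha⟩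
  simp only [smul_eq_mul, mul_one] at h3
  omega

lemma sum_all_one_of_ge (h1 : ∀ a ∈ s, 1 ≤ f a) (h : ∑ a ∈ s, f a ≤ s.card) :
    ∀ a ∈ s, f a = 1 := by
  classical
  by_contra hc
  push_neg at hc
  obtain ⟨a, ha, hfa⟩ := hc
  have hfa2 : 2 ≤ f a := by have := h1 a ha; omega
  have h2 : ∑ x ∈ s.erase a, f x + f a = ∑ x ∈ s, f x := Finset.sum_erase_add _ _ ha
  have h3 : (s.erase a).card • 1 ≤ ∑ x ∈ s.erase a, f x :=
    Finset.card_nsmul_le_sum _ _ _ (fun x hx => h1 x (Finset.mem_of_mem_erase hx))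
  have h4 : (s.erase a).card = s.card - 1 := Finset.card_erase_of_mem ha
  have h5 : 1 ≤ s.card := Finset.card_pos.mpr ⟨a, ha⟩
  simp only [smul_eq_mul, mul_one] at h3
  omega

lemma exists_unique_zero_of_sum (h1 : ∀ a ∈ s, f a ≤ 1) (h : ∑ a ∈ s, f a + 1 = s.card) :
    ∃! a, a ∈ s ∧ f a = 0 := by
  classical
  have hex : ∃ a ∈ s, f a = 0 := by
    by_contra hc
    push_neg at hc
    have : ∀ a ∈ s, f a = 1 := fun a ha => by have := h1 a ha; have := hc a ha; omega
    have hsum : ∑ a ∈ s, f a = s.card := by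
      rw [Finset.sum_congr rfl this]; simp
    omega
  obtain ⟨a, ha, hfa⟩ := hex
  refine ⟨a, ⟨ha, hfa⟩, ?_⟩
  rintro b ⟨hb, hfb⟩
  by_contra hne
  have h2 : ∑ x ∈ s.erase a, f x = ∑ x ∈ s, f x := Finset.sum_erase _ hfa
  have h2b : ∑ x ∈ (s.erase a).erase b, f x = ∑ x ∈ s.erase a, f x := Finset.sum_erase _ hfb
  have h3 : ∑ x ∈ (s.erase a).erase b, f x ≤ ((s.erase a).erase b).card • 1 :=
    Finset.sum_le_card_nsmul _ _ _
      (fun x hx => h1 x (Finset.mem_of_mem_erase (Finset.mem_of_mem_erase hx)))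
  have hb' : b ∈ s.erase a := Finset.mem_erase.mpr ⟨hne, hb⟩
  have h4 : ((s.erase a).erase b).card = s.card - 1 - 1 := by
    rw [Finset.card_erase_of_mem hb', Finset.card_erase_of_mem ha]
  have h5 : 2 ≤ s.card := Finset.one_lt_card.mpr ⟨a, ha, b, hb, fun hab => hne hab.symm⟩
  simp only [smul_eq_mul, mul_one] at h3
  omega

lemma double_count {β : Type*} (S : Finset α) (T : Finset β) (r : α → β → Prop)
    [∀ a b, Decidable (r a b)] :
    ∑ x ∈ S, (T.filter (fun t => r x t)).card = ∑ t ∈ T, (S.filter (fun x => r x t)).card := by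
  simp only [Finset.card_filter]
  exact Finset.sum_comm

end helpers

namespace KleinGeom

variable {q : ℕ} (G : KleinGeom q)

instance : Fintype G.P := G.fin

/-- The pencil of lines of the plane `π` through the point `x`. -/
def pencil (π : Set G.P) (x : G.P) : Set (Set G.P) :=
  {L | L ∈ G.lines ∧ L ⊆ π ∧ x ∈ L}

variable {G}

lemma pencil_ncard {π : Set G.P} (hπ : π ∈ G.planes) {x : G.P} (hx : x ∈ π) :
    (G.pencil π x).ncard = q + 1 :=
  G.plane_point_lines π hπ x hx

lemma exists_unique_pencil_line {π : Set G.P} (hπ : π ∈ G.planes) {x y : G.P}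
    (hx : x ∈ π) (hy : y ∈ π) (hxy : y ≠ x) :
    ∃! L, L ∈ G.pencil π x ∧ y ∈ L := by
  obtain ⟨L, ⟨hL1, hL2, hL3, hL4⟩, hLu⟩ := G.plane_two_points π hπ x hx y hy (Ne.symm hxy)
  exact ⟨L, ⟨⟨hL1, hL2, hL3⟩, hL4⟩, fun M ⟨⟨hM1, hM2, hM3⟩, hM4⟩ => hLu M ⟨hM1, hM2, hM3, hM4⟩⟩

lemma line_inter_subsingleton {π : Set G.P} (hπ : π ∈ G.planes) {L M : Set G.P}
    (hL : L ∈ G.lines) (hLπ : L ⊆ π) (hM : M ∈ G.lines) (hMπ : M ⊆ π) (hne : L ≠ M)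
    {y z : G.P} (hy : y ∈ L ∩ M) (hz : z ∈ L ∩ M) : y = z := by
  by_contra hyz
  obtain ⟨N, _, hNu⟩ := G.plane_two_points π hπ y (hLπ hy.1) z (hLπ hz.1) hyz
  exact hne ((hNu L ⟨hL, hLπ, hy.1, hz.1⟩).trans (hNu M ⟨hM, hMπ, hy.2, hz.2⟩).symm)

/-- Partition counting: for `x ∈ π` and `S ⊆ π` with `x ∉ S`, the lines of
the pencil at `x` partition `S`. -/
lemma pencil_sum {π : Set G.P} (hπ : π ∈ G.planes) {x : G.P} (hx : x ∈ π)
    {S : Set G.P} (hS : S ⊆ π) (hxS : x ∉ S) :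
    ∑ L ∈ (Set.toFinite (G.pencil π x)).toFinset, (L ∩ S).ncard = S.ncard := by
  classical
  have hdisj : ∀ L ∈ (Set.toFinite (G.pencil π x)).toFinset,
      ∀ M ∈ (Set.toFinite (G.pencil π x)).toFinset, L ≠ M →
      Disjoint ((Set.toFinite (L ∩ S)).toFinset) ((Set.toFinite (M ∩ S)).toFinset) := by
    intro L hL M hM hne
    rw [Set.Finite.mem_toFinset] at hL hM
    rw [Finset.disjoint_left]
    intro y hy hy'
    rw [Set.Finite.mem_toFinset] at hy hy'
    have hyx : y ≠ x := fun h => hxS (h ▸ hy.2)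
    obtain ⟨N, _, hNu⟩ := exists_unique_pencil_line hπ hx (hS hy.2) hyx
    exact hne ((hNu L ⟨hL, hy.1⟩).trans (hNu M ⟨hM, hy'.1⟩).symm)
  have hcover : ((Set.toFinite (G.pencil π x)).toFinset.biUnion
      (fun L => (Set.toFinite (L ∩ S)).toFinset)) = (Set.toFinite S).toFinset := by
    ext y
    simp only [Finset.mem_biUnion, Set.Finite.mem_toFinset]
    constructor
    · rintro ⟨L, _, _, hyS⟩; exact hyS
    · intro hyS
      have hyx : y ≠ x := fun h => hxS (h ▸ hyS)
      obtain ⟨L, ⟨hL, hyL⟩, _⟩ := exists_unique_pencil_line hπ hx (hS hyS) hyx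
      exact ⟨L, hL, hyL, hyS⟩
  calc ∑ L ∈ (Set.toFinite (G.pencil π x)).toFinset, (L ∩ S).ncard
      = ∑ L ∈ (Set.toFinite (G.pencil π x)).toFinset,
          ((Set.toFinite (L ∩ S)).toFinset).card := by
        refine Finset.sum_congr rfl fun L _ => ?_
        exact Set.ncard_eq_toFinset_card _ _
    _ = ((Set.toFinite (G.pencil π x)).toFinset.biUnion
          (fun L => (Set.toFinite (L ∩ S)).toFinset)).card := (Finset.card_biUnion hdisj).symm
    _ = ((Set.toFinite S).toFinset).card := by rw [hcover]
    _ = S.ncard := (Set.ncard_eq_toFinset_card _ _).symm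



section Oval

variable {q : ℕ} {G : KleinGeom q} {π O : Set G.P}

/-- There is a unique tangent line to the oval at each of its points. -/
lemma tangent_at (hπ : π ∈ G.planes) (hO1 : O ⊆ π) (hO2 : O.ncard = q + 1)
    (hO3 : ∀ L ∈ G.lines, L ⊆ π → (L ∩ O).ncard ≤ 2)
    {p : G.P} (hp : p ∈ O) :
    ∃! L, L ∈ G.pencil π p ∧ L ∩ O = {p} := by
  classical
  have hpπ : p ∈ π := hO1 hp
  have hsum := pencil_sum hπ hpπ (S := O \ {p}) (Set.diff_subset.trans hO1)
    (fun h => h.2 rfl)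
  have hScard : (O \ {p}).ncard = q := by
    rw [Set.ncard_diff_singleton_of_mem hp, hO2]; omega
  have hterm : ∀ L ∈ (Set.toFinite (G.pencil π p)).toFinset, (L ∩ (O \ {p})).ncard ≤ 1 := by
    intro L hL
    rw [Set.Finite.mem_toFinset] at hL
    have hL1 : L ∈ G.lines := hL.1
    have hL2 : L ⊆ π := hL.2.1
    have hL3 : p ∈ L := hL.2.2
    have h1 : L ∩ (O \ {p}) = (L ∩ O) \ {p} := by ext y; simp; tauto
    rw [h1, Set.ncard_diff_singleton_of_mem (Set.mem_inter hL3 hp)]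
    have := hO3 L hL1 hL2
    omega
  have hPcard : ((Set.toFinite (G.pencil π p)).toFinset).card = q + 1 := by
    rw [← Set.ncard_eq_toFinset_card]; exact pencil_ncard hπ hpπ
  have hu := exists_unique_zero_of_sum hterm (by rw [hsum, hScard, hPcard])
  obtain ⟨L, ⟨hLmem, hL0⟩, hLu⟩ := hu
  rw [Set.Finite.mem_toFinset] at hLmem
  have hkey : ∀ M, M ∈ G.pencil π p → ((M ∩ (O \ {p})).ncard = 0 ↔ M ∩ O = {p}) := by
    intro M hM
    have h1 : M ∩ (O \ {p}) = (M ∩ O) \ {p} := by ext y; simp; tauto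
    rw [h1, Set.ncard_eq_zero (Set.toFinite _), Set.diff_eq_empty]
    constructor
    · intro h; exact Set.Subset.antisymm h (by simp [hM.2.2, hp])
    · intro h; rw [h]
  refine ⟨L, ⟨hLmem, (hkey L hLmem).mp hL0⟩, ?_⟩
  rintro M ⟨hMmem, hMO⟩
  exact hLu M ⟨(Set.Finite.mem_toFinset _).mpr hMmem, (hkey M hMmem).mpr hMO⟩

/-- Every point of the plane off the oval lies on a tangent (q even). -/
lemma offpoint_tangent (hq : Even q) (hπ : π ∈ G.planes) (hO1 : O ⊆ π)
    (hO2 : O.ncard = q + 1) (hO3 : ∀ L ∈ G.lines, L ⊆ π → (L ∩ O).ncard ≤ 2)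
    {x : G.P} (hx : x ∈ π) (hxO : x ∉ O) :
    ∃ L ∈ G.pencil π x, (L ∩ O).ncard = 1 := by
  classical
  have hsum := pencil_sum hπ hx (S := O) hO1 hxO
  by_contra hc
  push_neg at hc
  have heven : ∀ L ∈ (Set.toFinite (G.pencil π x)).toFinset, Even ((L ∩ O).ncard) := by
    intro L hL
    rw [Set.Finite.mem_toFinset] at hL
    have h2 := hO3 L hL.1 hL.2.1
    have h1 := hc L hL
    interval_cases h : (L ∩ O).ncard <;> simp_all
  have := Finset.even_sum _ heven
  rw [hsum, hO2] at this
  exact (Nat.even_add_one.mp this) hq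

/-- Every line of the pencil at a point off a line `L` of the plane meets `L`
in exactly one point. -/
lemma pencil_meets_line (hπ : π ∈ G.planes) {L : Set G.P} (hL : L ∈ G.lines)
    (hLπ : L ⊆ π) {x : G.P} (hx : x ∈ π) (hxL : x ∉ L) :
    ∀ M ∈ G.pencil π x, (M ∩ L).ncard = 1 := by
  classical
  have hsum := pencil_sum hπ hx (S := L) hLπ hxL
  have hterm : ∀ M ∈ (Set.toFinite (G.pencil π x)).toFinset, (M ∩ L).ncard ≤ 1 := by
    intro M hM
    rw [Set.Finite.mem_toFinset] at hM
    have hne : M ≠ L := fun h => hxL (h ▸ hM.2.2)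
    rw [Set.ncard_le_one (Set.toFinite _)]
    intro a ha b hb
    exact line_inter_subsingleton hπ hM.1 hM.2.1 hL hLπ hne ha hb
  have hPcard : ((Set.toFinite (G.pencil π x)).toFinset).card = q + 1 := by
    rw [← Set.ncard_eq_toFinset_card]; exact pencil_ncard hπ hx
  have hall := sum_all_one_of_le hterm (by rw [hsum, G.line_card L hL, hPcard])
  intro M hM
  exact hall M ((Set.Finite.mem_toFinset _).mpr hM)

/-- Any two distinct lines of a plane meet in exactly one point. -/
lemma two_lines_meet (hπ : π ∈ G.planes) {L M : Set G.P} (hL : L ∈ G.lines)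
    (hLπ : L ⊆ π) (hM : M ∈ G.lines) (hMπ : M ⊆ π) (hne : M ≠ L) :
    (M ∩ L).ncard = 1 := by
  have hnotsub : ¬ M ⊆ L := by
    intro hsub
    exact hne (Set.eq_of_subset_of_ncard_le hsub
      (by rw [G.line_card L hL, G.line_card M hM]) (Set.toFinite _))
  obtain ⟨x, hxM, hxL⟩ := Set.not_subset.mp hnotsub
  exact pencil_meets_line hπ hL hLπ (hMπ hxM) hxL M ⟨hM, hMπ, hxM⟩

end Oval


open scoped Classical

section Tangents

variable {q : ℕ} {G : KleinGeom q} {π O : Set G.P}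

/-- The set of tangent lines to `O` in the plane `π`. -/
def tset (G : KleinGeom q) (π O : Set G.P) : Set (Set G.P) :=
  {t | t ∈ G.lines ∧ t ⊆ π ∧ (t ∩ O).ncard = 1}

lemma filter_card_eq_ncard {α : Type*} [Finite α] (S : Set α) (p : α → Prop) :
    (((Set.toFinite S).toFinset.filter p).card) = (S ∩ {x | p x}).ncard := by
  classical
  rw [Set.ncard_eq_toFinset_card (S ∩ {x | p x}) (Set.toFinite _)]
  congr 1
  ext x
  simp [Set.Finite.mem_toFinset]

/-- The tangent lines through a point `p` of the oval form a singleton. -/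
lemma tangents_through_oval_point (hπ : π ∈ G.planes) (hO1 : O ⊆ π)
    (hO2 : O.ncard = q + 1) (hO3 : ∀ L ∈ G.lines, L ⊆ π → (L ∩ O).ncard ≤ 2)
    {p : G.P} (hp : p ∈ O) :
    ∃ t₀, {t | t ∈ G.tset π O ∧ p ∈ t} = {t₀} := by
  obtain ⟨L, ⟨hLmem, hLO⟩, hLu⟩ := tangent_at hπ hO1 hO2 hO3 hp
  refine ⟨L, ?_⟩
  ext t
  simp only [Set.mem_setOf_eq, Set.mem_singleton_iff]
  constructor
  · rintro ⟨⟨ht1, ht2, ht3⟩, htp⟩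
    have htO : t ∩ O = {p} := by
      obtain ⟨a, ha⟩ := Set.ncard_eq_one.mp ht3
      have : p ∈ ({a} : Set G.P) := ha ▸ Set.mem_inter htp hp
      rw [ha, this]
    have hpt : p ∈ t := ((Set.ext_iff.mp htO p).mpr rfl).1
    exact hLu t ⟨⟨ht1, ht2, hpt⟩, htO⟩
  · rintro rfl
    refine ⟨⟨hLmem.1, hLmem.2.1, by rw [hLO]; simp⟩, hLmem.2.2⟩

/-- There are exactly `q+1` tangent lines. -/
lemma tset_ncard (hπ : π ∈ G.planes) (hO1 : O ⊆ π)
    (hO2 : O.ncard = q + 1) (hO3 : ∀ L ∈ G.lines, L ⊆ π → (L ∩ O).ncard ≤ 2) :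
    (G.tset π O).ncard = q + 1 := by
  classical
  have hdc := double_count ((Set.toFinite O).toFinset) ((Set.toFinite (G.tset π O)).toFinset)
    (fun x t => x ∈ t)
  have hlhs : ∀ p ∈ (Set.toFinite O).toFinset,
      (((Set.toFinite (G.tset π O)).toFinset.filter (fun t => p ∈ t)).card) = 1 := by
    intro p hp
    rw [Set.Finite.mem_toFinset] at hp
    obtain ⟨t₀, ht₀⟩ := tangents_through_oval_point hπ hO1 hO2 hO3 hp
    rw [filter_card_eq_ncard]
    have : G.tset π O ∩ {t | p ∈ t} = {t₀} := by
      rw [← ht₀]; ext t; simp [Set.mem_setOf_eq]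
    rw [this, Set.ncard_singleton]
  have hrhs : ∀ t ∈ (Set.toFinite (G.tset π O)).toFinset,
      (((Set.toFinite O).toFinset.filter (fun x => x ∈ t)).card) = 1 := by
    intro t ht
    rw [Set.Finite.mem_toFinset] at ht
    rw [filter_card_eq_ncard, Set.setOf_mem_eq, Set.inter_comm]
    exact ht.2.2
  rw [Finset.sum_congr rfl hlhs, Finset.sum_congr rfl hrhs] at hdc
  simp only [Finset.sum_const, smul_eq_mul, mul_one] at hdc
  rw [← Set.ncard_eq_toFinset_card O (Set.toFinite O), hO2,
    ← Set.ncard_eq_toFinset_card _ (Set.toFinite (G.tset π O))] at hdc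
  exact hdc.symm

/-- Through a point of a secant line off the oval there is exactly one tangent. -/
lemma secant_point_unique_tangent (hq : Even q) (hπ : π ∈ G.planes) (hO1 : O ⊆ π)
    (hO2 : O.ncard = q + 1) (hO3 : ∀ L ∈ G.lines, L ⊆ π → (L ∩ O).ncard ≤ 2)
    {L : Set G.P} (hL : L ∈ G.lines) (hLπ : L ⊆ π) (hL2 : (L ∩ O).ncard = 2)
    {x : G.P} (hxL : x ∈ L) (hxO : x ∉ O)
    {t t' : Set G.P} (ht : t ∈ G.tset π O) (ht' : t' ∈ G.tset π O)
    (hxt : x ∈ t) (hxt' : x ∈ t') : t = t' := by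
  classical
  set Tf := (Set.toFinite (G.tset π O)).toFinset with hTf
  set Lf := (Set.toFinite L).toFinset with hLf
  have hdc := double_count Lf Tf (fun x t => x ∈ t)
  -- RHS: each tangent meets L once
  have hrhs : ∀ u ∈ Tf, ((Lf.filter (fun y => y ∈ u)).card) = 1 := by
    intro u hu
    rw [hTf, Set.Finite.mem_toFinset] at hu
    have hune : u ≠ L := by
      intro h; subst h; have h1 := hu.2.2; rw [hL2] at h1; omega
    rw [hLf, filter_card_eq_ncard, Set.setOf_mem_eq, Set.inter_comm]
    exact two_lines_meet hπ hL hLπ hu.1 hu.2.1 hune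
  rw [Finset.sum_congr rfl hrhs] at hdc
  simp only [Finset.sum_const, smul_eq_mul, mul_one] at hdc
  have hTcard : Tf.card = q + 1 := by
    rw [hTf, ← Set.ncard_eq_toFinset_card]; exact tset_ncard hπ hO1 hO2 hO3
  rw [hTcard] at hdc
  -- split LHS over O-membership
  have hsplit := Finset.sum_filter_add_sum_filter_not Lf (fun y => y ∈ O)
    (fun y => (Tf.filter (fun t => y ∈ t)).card)
  rw [hdc] at hsplit
  have hin : ∀ y ∈ Lf.filter (fun y => y ∈ O), ((Tf.filter (fun t => y ∈ t)).card) = 1 := by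
    intro y hy
    rw [Finset.mem_filter] at hy
    obtain ⟨t₀, ht₀⟩ := tangents_through_oval_point hπ hO1 hO2 hO3 hy.2
    rw [hTf, filter_card_eq_ncard]
    have : G.tset π O ∩ {t | y ∈ t} = {t₀} := by
      rw [← ht₀]; ext u; simp [Set.mem_setOf_eq]
    rw [this, Set.ncard_singleton]
  rw [Finset.sum_congr rfl hin] at hsplit
  simp only [Finset.sum_const, smul_eq_mul, mul_one] at hsplit
  have hinter : (Lf.filter (fun y => y ∈ O)).card = 2 := by
    rw [hLf, filter_card_eq_ncard, Set.setOf_mem_eq]; exact hL2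
  rw [hinter] at hsplit
  -- the off-oval points of L
  have hLcard : Lf.card = q + 1 := by
    rw [hLf, ← Set.ncard_eq_toFinset_card]; exact G.line_card L hL
  have hncard : (Lf.filter (fun y => ¬ y ∈ O)).card = q - 1 := by
    have := Finset.card_filter_add_card_filter_not (s := Lf) (p := (fun y => y ∈ O))
    omega
  have hge : ∀ y ∈ Lf.filter (fun y => ¬ y ∈ O), 1 ≤ ((Tf.filter (fun t => y ∈ t)).card) := by
    intro y hy
    rw [Finset.mem_filter, hLf, Set.Finite.mem_toFinset] at hy
    obtain ⟨M, hM, hM1⟩ := offpoint_tangent hq hπ hO1 hO2 hO3 (hLπ hy.1) hy.2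
    refine Finset.card_pos.mpr ⟨M, ?_⟩
    rw [Finset.mem_filter, hTf, Set.Finite.mem_toFinset]
    exact ⟨⟨hM.1, hM.2.1, hM1⟩, hM.2.2⟩
  have hall := sum_all_one_of_ge hge (le_of_eq (by omega))
  have hx' : x ∈ Lf.filter (fun y => ¬ y ∈ O) := by
    rw [Finset.mem_filter, hLf, Set.Finite.mem_toFinset]; exact ⟨hxL, hxO⟩
  have hcard1 := hall x hx'
  have htmem : t ∈ Tf.filter (fun u => x ∈ u) := by
    rw [Finset.mem_filter, hTf, Set.Finite.mem_toFinset]; exact ⟨ht, hxt⟩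
  have htmem' : t' ∈ Tf.filter (fun u => x ∈ u) := by
    rw [Finset.mem_filter, hTf, Set.Finite.mem_toFinset]; exact ⟨ht', hxt'⟩
  exact Finset.card_le_one.mp (le_of_eq hcard1) t htmem t' htmem'

end Tangents


section Nucleus

variable {q : ℕ} {G : KleinGeom q} {π O : Set G.P}

/-- Every oval of a plane of even order has a nucleus. -/
lemma nucleus_exists (hq : Even q) (hq2 : 1 ≤ q) (hπ : π ∈ G.planes) (hO1 : O ⊆ π)
    (hO2 : O.ncard = q + 1) (hO3 : ∀ L ∈ G.lines, L ⊆ π → (L ∩ O).ncard ≤ 2) :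
    ∃ n, n ∈ π ∧ n ∉ O ∧ ∀ L ∈ G.lines, L ⊆ π → n ∈ L → (L ∩ O).ncard = 1 := by
  classical
  have hO1lt : 1 < O.ncard := by rw [hO2]; omega
  obtain ⟨a, ha, b, hb, hab⟩ := (Set.one_lt_ncard (Set.toFinite O)).mp hO1lt
  obtain ⟨Ta, ⟨hTa, hTaO⟩, _⟩ := tangent_at hπ hO1 hO2 hO3 ha
  obtain ⟨Tb, ⟨hTb, hTbO⟩, _⟩ := tangent_at hπ hO1 hO2 hO3 hb
  have hTab : Ta ≠ Tb := by
    intro h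
    have : a ∈ Tb ∩ O := h ▸ Set.mem_inter hTa.2.2 ha
    rw [hTbO] at this
    exact hab this
  have hmeet : (Tb ∩ Ta).ncard = 1 :=
    two_lines_meet hπ hTa.1 hTa.2.1 hTb.1 hTb.2.1 (Ne.symm hTab)
  obtain ⟨n, hn⟩ := Set.ncard_eq_one.mp hmeet
  have hnTb : n ∈ Tb := by rw [← Set.singleton_subset_iff, ← hn]; exact Set.inter_subset_left
  have hnTa : n ∈ Ta := by
    have : n ∈ Tb ∩ Ta := by rw [hn]; rfl
    exact this.2
  have hnπ : n ∈ π := hTa.2.1 hnTa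
  have hnO : n ∉ O := by
    intro hnO
    have h1 : n ∈ Ta ∩ O := Set.mem_inter hnTa hnO
    have h2 : n ∈ Tb ∩ O := Set.mem_inter hnTb hnO
    rw [hTaO] at h1; rw [hTbO] at h2
    exact hab (h1 ▸ h2 ▸ rfl)
  have hTatan : Ta ∈ G.tset π O := ⟨hTa.1, hTa.2.1, by rw [hTaO]; simp⟩
  have hTbtan : Tb ∈ G.tset π O := ⟨hTb.1, hTb.2.1, by rw [hTbO]; simp⟩
  have hnosec : ∀ L ∈ G.pencil π n, (L ∩ O).ncard ≤ 1 := by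
    intro L hL
    by_contra hc
    have h2 : (L ∩ O).ncard = 2 := le_antisymm (hO3 L hL.1 hL.2.1) (by omega)
    exact hTab (secant_point_unique_tangent hq hπ hO1 hO2 hO3 hL.1 hL.2.1 h2
      hL.2.2 hnO hTatan hTbtan hnTa hnTb)
  have hsum := pencil_sum hπ hnπ (S := O) hO1 hnO
  have hterm : ∀ L ∈ (Set.toFinite (G.pencil π n)).toFinset, (L ∩ O).ncard ≤ 1 := by
    intro L hL
    rw [Set.Finite.mem_toFinset] at hL
    exact hnosec L hL
  have hPcard : ((Set.toFinite (G.pencil π n)).toFinset).card = q + 1 := by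
    rw [← Set.ncard_eq_toFinset_card]; exact pencil_ncard hπ hnπ
  have hall := sum_all_one_of_le hterm (by rw [hsum, hO2, hPcard])
  refine ⟨n, hnπ, hnO, fun L hL hLπ hnL => ?_⟩
  exact hall L ((Set.Finite.mem_toFinset _).mpr ⟨hL, hLπ, hnL⟩)

/-- Every tangent passes through a nucleus. -/
lemma tangent_thru_nucleus (hπ : π ∈ G.planes) (hO1 : O ⊆ π)
    (hO2 : O.ncard = q + 1) (hO3 : ∀ L ∈ G.lines, L ⊆ π → (L ∩ O).ncard ≤ 2)
    {n : G.P} (hnπ : n ∈ π) (hnO : n ∉ O)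
    (hn : ∀ L ∈ G.lines, L ⊆ π → n ∈ L → (L ∩ O).ncard = 1)
    {t : Set G.P} (ht : t ∈ G.tset π O) : n ∈ t := by
  obtain ⟨c, hc⟩ := Set.ncard_eq_one.mp ht.2.2
  have hcO : c ∈ O := by
    have : c ∈ t ∩ O := by rw [hc]; rfl
    exact this.2
  have hct : c ∈ t := by
    have : c ∈ t ∩ O := by rw [hc]; rfl
    exact this.1
  have hcn : c ≠ n := fun h => hnO (h ▸ hcO)
  obtain ⟨N, ⟨hN, hcN⟩, _⟩ := exists_unique_pencil_line hπ hnπ (hO1 hcO) hcn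
  have hNO : N ∩ O = {c} := by
    obtain ⟨d, hd⟩ := Set.ncard_eq_one.mp (hn N hN.1 hN.2.1 hN.2.2)
    have : c ∈ ({d} : Set G.P) := hd ▸ Set.mem_inter hcN hcO
    rw [hd, this]
  obtain ⟨L₀, _, hLu⟩ := tangent_at hπ hO1 hO2 hO3 hcO
  have h1 : N = L₀ := hLu N ⟨⟨hN.1, hN.2.1, hcN⟩, hNO⟩
  have h2 : t = L₀ := hLu t ⟨⟨ht.1, ht.2.1, hct⟩, hc⟩
  rw [h2, ← h1]
  exact hN.2.2

/-- The nucleus of an oval is unique. -/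
lemma nucleus_unique (hq2 : 1 ≤ q) (hπ : π ∈ G.planes) (hO1 : O ⊆ π)
    (hO2 : O.ncard = q + 1) (hO3 : ∀ L ∈ G.lines, L ⊆ π → (L ∩ O).ncard ≤ 2)
    {k k' : G.P} (hkπ : k ∈ π) (hkO : k ∉ O)
    (hk : ∀ L ∈ G.lines, L ⊆ π → k ∈ L → (L ∩ O).ncard = 1)
    (hk'π : k' ∈ π) (hk'O : k' ∉ O)
    (hk' : ∀ L ∈ G.lines, L ⊆ π → k' ∈ L → (L ∩ O).ncard = 1) : k = k' := by
  by_contra hne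
  obtain ⟨L, ⟨hL1, hL2, hL3, hL4⟩, hLu⟩ := G.plane_two_points π hπ k hkπ k' hk'π hne
  have hLO : (L ∩ O).ncard = 1 := hk L hL1 hL2 hL3
  have hnot : ¬ O ⊆ L := by
    intro hsub
    have : O ⊆ L ∩ O := fun y hy => Set.mem_inter (hsub hy) hy
    have := Set.ncard_le_ncard this (Set.toFinite _)
    omega
  obtain ⟨p, hpO, hpL⟩ := Set.not_subset.mp hnot
  have hpk : p ≠ k := fun h => hkO (h ▸ hpO)
  have hpk' : p ≠ k' := fun h => hk'O (h ▸ hpO)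
  obtain ⟨M, ⟨hM, hpM⟩, _⟩ := exists_unique_pencil_line hπ hkπ (hO1 hpO) hpk
  obtain ⟨M', ⟨hM', hpM'⟩, _⟩ := exists_unique_pencil_line hπ hk'π (hO1 hpO) hpk'
  have hMO : M ∩ O = {p} := by
    obtain ⟨d, hd⟩ := Set.ncard_eq_one.mp (hk M hM.1 hM.2.1 hM.2.2)
    have : p ∈ ({d} : Set G.P) := hd ▸ Set.mem_inter hpM hpO
    rw [hd, this]
  have hM'O : M' ∩ O = {p} := by
    obtain ⟨d, hd⟩ := Set.ncard_eq_one.mp (hk' M' hM'.1 hM'.2.1 hM'.2.2)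
    have : p ∈ ({d} : Set G.P) := hd ▸ Set.mem_inter hpM' hpO
    rw [hd, this]
  have hMM' : M ≠ M' := by
    intro h
    have hkM' : k ∈ M := hM.2.2
    have hk'M : k' ∈ M := h ▸ hM'.2.2
    have : M = L := hLu M ⟨hM.1, hM.2.1, hkM', hk'M⟩
    exact hpL (this ▸ hpM)
  obtain ⟨L₀, _, hLu₀⟩ := tangent_at hπ hO1 hO2 hO3 hpO
  exact hMM' ((hLu₀ M ⟨⟨hM.1, hM.2.1, hpM⟩, hMO⟩).trans
    (hLu₀ M' ⟨⟨hM'.1, hM'.2.1, hpM'⟩, hM'O⟩).symm)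

end Nucleus


section Main

variable {q : ℕ} {G : KleinGeom q} {X : Set G.P}

/-- A type-(S) plane misses the hyperoval set entirely. -/
lemma planeS_empty (hq2 : 2 ≤ q) (h2 : G.Prop2 X) {π : Set G.P} (hπ : π ∈ G.planes)
    (hS : (X ∩ π).ncard = 1) :
    ((X \ G.A1 X) ∪ G.A2 X) ∩ π = ∅ := by
  ext y
  simp only [Set.mem_inter_iff, Set.mem_union, Set.mem_empty_iff_false, iff_false]
  rintro ⟨hy1 | hy2, hyπ⟩
  · exact hy1.2 ⟨hy1.1, π, hπ, hyπ, hS⟩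
  · have := (h2 π hπ y hy2 hyπ).1.2.1
    rw [hS] at this
    omega

/-- A type-(C) plane meets the hyperoval set in its oval section plus nucleus. -/
lemma planeC_eq (hq : Even q) (hq2 : 2 ≤ q) (h1 : G.Prop1 X) (h2 : G.Prop2 X)
    {π : Set G.P} (hπ : π ∈ G.planes) (hC : G.IsOval π (X ∩ π)) :
    ∃ n, n ∉ X ∩ π ∧ G.IsKernel π (X ∩ π) n ∧
      ((X \ G.A1 X) ∪ G.A2 X) ∩ π = (X ∩ π) ∪ {n} := by
  obtain ⟨hO1, hO2, hO3⟩ := hC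
  obtain ⟨n, hnπ, hnO, hn⟩ := nucleus_exists hq (by omega) hπ hO1 hO2 hO3
  have hker : G.IsKernel π (X ∩ π) n := ⟨hnπ, hnO, hn⟩
  have hnA2 : n ∈ G.A2 X := ⟨π, hπ, ⟨hO1, hO2, hO3⟩, hker⟩
  refine ⟨n, hnO, hker, ?_⟩
  ext y
  simp only [Set.mem_inter_iff, Set.mem_union, Set.mem_singleton_iff]
  constructor
  · rintro ⟨hy1 | hy2, hyπ⟩
    · exact Or.inl ⟨hy1.1, hyπ⟩
    · obtain ⟨_, hker'⟩ := h2 π hπ y hy2 hyπ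
      exact Or.inr (nucleus_unique (by omega) hπ hO1 hO2 hO3 hker'.1 hker'.2.1 hker'.2.2
        hnπ hnO hn)
  · rintro (hyO | rfl)
    · have hyA1 : y ∉ G.A1 X := by
        intro hyA1
        have := h1 π hπ y hyA1 hyO.2
        rw [hO2] at this
        omega
      exact ⟨Or.inl ⟨hyO.1, hyA1⟩, hyO.2⟩
    · exact ⟨Or.inr hnA2, hnπ⟩

end Main

end KleinGeom
/-- For a generalized quadratic set of type (SC) on `Q⁺(5,q)`, `q` even,
satisfying properties (1) and (2), the set `(X \ A₁) ∪ A₂` is a hyperoval of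
`Q⁺(5,q)`: it is nonempty, every plane meets it in `∅` or in a hyperoval
(`q+2` points, no three collinear) of that plane, and every line meets it in
`0` or `2` points. -/
theorem gqs_hyperoval (q : ℕ) (hq : Even q) (hq2 : 2 ≤ q)
    (G : KleinGeom q) (X : Set G.P)
    (hX : G.IsGQS X) (h1 : G.Prop1 X) (h2 : G.Prop2 X) :
    ((X \ G.A1 X) ∪ G.A2 X).Nonempty ∧
    (∀ π ∈ G.planes, ((X \ G.A1 X) ∪ G.A2 X) ∩ π = ∅ ∨
      ((((X \ G.A1 X) ∪ G.A2 X) ∩ π).ncard = q + 2 ∧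
        ∀ L ∈ G.lines, L ⊆ π →
          (L ∩ (((X \ G.A1 X) ∪ G.A2 X) ∩ π)).ncard ≤ 2)) ∧
    (∀ L ∈ G.lines, (L ∩ ((X \ G.A1 X) ∪ G.A2 X)).ncard = 0 ∨
      (L ∩ ((X \ G.A1 X) ∪ G.A2 X)).ncard = 2) := by
  classical
  set H := (X \ G.A1 X) ∪ G.A2 X with hH
  obtain ⟨hdich, hexS, πC, hπC, hCC⟩ := hX
  refine ⟨?_, ?_, ?_⟩
  · -- nonempty
    obtain ⟨n, hnO, hker, _⟩ := KleinGeom.planeC_eq hq hq2 h1 h2 hπC hCC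
    exact ⟨n, Or.inr ⟨πC, hπC, hCC, hker⟩⟩
  · -- planes
    intro π hπ
    rcases hdich π hπ with hS | hC
    · exact Or.inl (KleinGeom.planeS_empty hq2 h2 hπ hS)
    · obtain ⟨n, hnO, hker, heq⟩ := KleinGeom.planeC_eq hq hq2 h1 h2 hπ hC
      obtain ⟨hO1, hO2, hO3⟩ := hC
      refine Or.inr ⟨?_, ?_⟩
      · rw [heq, Set.union_singleton, Set.ncard_insert_of_notMem hnO (Set.toFinite _), hO2]
      · intro L hL hLπ
        rw [heq]
        by_cases hnL : n ∈ L
        · have hone : (L ∩ (X ∩ π)).ncard = 1 := hker.2.2 L hL hLπ hnL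
          obtain ⟨c, hc⟩ := Set.ncard_eq_one.mp hone
          have hsub : L ∩ ((X ∩ π) ∪ {n}) ⊆ {c, n} := by
            rintro y ⟨hyL, hyO | hyn⟩
            · have : y ∈ ({c} : Set G.P) := hc ▸ Set.mem_inter hyL hyO
              exact Or.inl this
            · exact Or.inr hyn
          calc (L ∩ ((X ∩ π) ∪ {n})).ncard ≤ ({c, n} : Set G.P).ncard :=
                Set.ncard_le_ncard hsub (Set.toFinite _)
            _ ≤ 2 := by
                refine le_trans (Set.ncard_insert_le c {n}) ?_
                rw [Set.ncard_singleton]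
        · have : L ∩ ((X ∩ π) ∪ {n}) = L ∩ (X ∩ π) := by
            ext y
            simp only [Set.mem_inter_iff, Set.mem_union, Set.mem_singleton_iff]
            constructor
            · rintro ⟨hyL, hyO | rfl⟩
              · exact ⟨hyL, hyO⟩
              · exact absurd hyL hnL
            · rintro ⟨hyL, hyO⟩; exact ⟨hyL, Or.inl hyO⟩
          rw [this]
          exact hO3 L hL hLπ
  · -- lines
    intro L hL
    obtain ⟨π, hπ, hLπ⟩ := G.line_in_plane L hL
    have hLH : L ∩ H = L ∩ (H ∩ π) := by
      ext y
      simp only [Set.mem_inter_iff]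
      exact ⟨fun ⟨a, b⟩ => ⟨a, b, hLπ a⟩, fun ⟨a, b, _⟩ => ⟨a, b⟩⟩
    rcases hdich π hπ with hS | hC
    · left
      rw [hLH, KleinGeom.planeS_empty hq2 h2 hπ hS]
      simp
    · obtain ⟨n, hnO, hker, heq⟩ := KleinGeom.planeC_eq hq hq2 h1 h2 hπ hC
      obtain ⟨hO1, hO2, hO3⟩ := hC
      rw [hLH, heq]
      by_cases hnL : n ∈ L
      · right
        have hone : (L ∩ (X ∩ π)).ncard = 1 := hker.2.2 L hL hLπ hnL
        obtain ⟨c, hc⟩ := Set.ncard_eq_one.mp hone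
        have hcL : c ∈ L := by
          have : c ∈ L ∩ (X ∩ π) := by rw [hc]; rfl
          exact this.1
        have hcO : c ∈ X ∩ π := by
          have : c ∈ L ∩ (X ∩ π) := by rw [hc]; rfl
          exact this.2
        have hcn : c ≠ n := fun h => hnO (h ▸ hcO)
        have : L ∩ ((X ∩ π) ∪ {n}) = {c, n} := by
          ext y
          simp only [Set.mem_inter_iff, Set.mem_union, Set.mem_singleton_iff,
            Set.mem_insert_iff]
          constructor
          · rintro ⟨hyL, hyO | rfl⟩
            · have : y ∈ ({c} : Set G.P) := hc ▸ Set.mem_inter hyL hyO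
              exact Or.inl this
            · exact Or.inr rfl
          · rintro (rfl | rfl)
            · exact ⟨hcL, Or.inl hcO⟩
            · exact ⟨hnL, Or.inr rfl⟩
        rw [this]
        exact Set.ncard_pair hcn
      · have hLO : L ∩ ((X ∩ π) ∪ {n}) = L ∩ (X ∩ π) := by
          ext y
          simp only [Set.mem_inter_iff, Set.mem_union, Set.mem_singleton_iff]
          constructor
          · rintro ⟨hyL, hyO | rfl⟩
            · exact ⟨hyL, hyO⟩
            · exact absurd hyL hnL
          · rintro ⟨hyL, hyO⟩; exact ⟨hyL, Or.inl hyO⟩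
        rw [hLO]
        have hle : (L ∩ (X ∩ π)).ncard ≤ 2 := hO3 L hL hLπ
        have hne1 : (L ∩ (X ∩ π)).ncard ≠ 1 := by
          intro h1'
          exact hnL (KleinGeom.tangent_thru_nucleus hπ hO1 hO2 hO3 hker.1 hker.2.1
            hker.2.2 ⟨hL, hLπ, h1'⟩)
        omega
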